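/- For every d ≥ 1 and each ε ∈ {0,1}, there is a unique ℂ(q,z)-linear map g_ε : Markov(⊔S_dB) → Markov(⊔S_{d−1}B) such that g_ε([β,n]) = [f_{n,ε}(β), n] for every n ≥ 2 and every β ∈ S_dB_n; that is, the families {f_{n,0}}_{n} and {f_{n,1}}_{n} are compatible with the defining relations of the Markov modules. -/

import Mathlib

open scoped TensorProduct DirectSum

set_option synthInstance.maxHeartbeats 1000000
set_option maxHeartbeats 2000000

namespace SingularHOMFLYPT

/-- Generators of the singular braid monoid on `n` strands: `pos i` is `σ_{i+1}`,
`neg i` is `σ_{i+1}⁻¹` and `tau i` is `τ_{i+1}`, for `i : Fin (n-1)`. -/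
inductive SBGen (n : ℕ) : Type
  | pos : Fin (n - 1) → SBGen n
  | neg : Fin (n - 1) → SBGen n
  | tau : Fin (n - 1) → SBGen n

open FreeMonoid in
/-- The defining relations of the singular braid monoid `SB_n` (Baez, Birman). -/
inductive SBRel (n : ℕ) : FreeMonoid (SBGen n) → FreeMonoid (SBGen n) → Prop
  | inv_right (i : Fin (n - 1)) : SBRel n (of (.pos i) * of (.neg i)) 1
  | inv_left (i : Fin (n - 1)) : SBRel n (of (.neg i) * of (.pos i)) 1
  | sigma_tau (i : Fin (n - 1)) :
      SBRel n (of (.pos i) * of (.tau i)) (of (.tau i) * of (.pos i))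
  | braid (i j : Fin (n - 1)) (h : (i : ℕ) + 1 = j ∨ (j : ℕ) + 1 = i) :
      SBRel n (of (.pos i) * of (.pos j) * of (.pos i))
        (of (.pos j) * of (.pos i) * of (.pos j))
  | braid_tau (i j : Fin (n - 1)) (h : (i : ℕ) + 1 = j ∨ (j : ℕ) + 1 = i) :
      SBRel n (of (.pos i) * of (.pos j) * of (.tau i))
        (of (.tau j) * of (.pos i) * of (.pos j))
  | comm_ss (i j : Fin (n - 1)) (h : (i : ℕ) + 2 ≤ j ∨ (j : ℕ) + 2 ≤ i) :
      SBRel n (of (.pos i) * of (.pos j)) (of (.pos j) * of (.pos i))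
  | comm_st (i j : Fin (n - 1)) (h : (i : ℕ) + 2 ≤ j ∨ (j : ℕ) + 2 ≤ i) :
      SBRel n (of (.pos i) * of (.tau j)) (of (.tau j) * of (.pos i))
  | comm_tt (i j : Fin (n - 1)) (h : (i : ℕ) + 2 ≤ j ∨ (j : ℕ) + 2 ≤ i) :
      SBRel n (of (.tau i) * of (.tau j)) (of (.tau j) * of (.tau i))

/-- The congruence on the free monoid generated by the singular braid relations. -/
def SBcon (n : ℕ) : Con (FreeMonoid (SBGen n)) := conGen (SBRel n)

/-- The singular braid monoid on `n` strands, as a presented monoid. -/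
abbrev SB (n : ℕ) : Type := (SBcon n).Quotient

/-- The canonical projection from the free monoid onto `SB n`. -/
def SB.mk {n : ℕ} : FreeMonoid (SBGen n) →* SB n := Con.mk' (SBcon n)

/-- The generator `σ_{i+1}` of `SB n`. -/
def sG {n : ℕ} (i : Fin (n - 1)) : SB n := SB.mk (.of (.pos i))

/-- The generator `σ_{i+1}⁻¹` of `SB n`. -/
def sInvG {n : ℕ} (i : Fin (n - 1)) : SB n := SB.mk (.of (.neg i))

/-- The generator `τ_{i+1}` of `SB n`. -/
def tauG {n : ℕ} (i : Fin (n - 1)) : SB n := SB.mk (.of (.tau i))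

theorem SB.sound {n : ℕ} {a b : FreeMonoid (SBGen n)} (h : SBRel n a b) :
    SB.mk a = SB.mk b :=
  Con.eq _ |>.2 (ConGen.Rel.of a b h)

/-- Lift a map on generators to a monoid homomorphism on `SB n`. -/
def SB.lift {n : ℕ} {M : Type*} [Monoid M] (f : SBGen n → M)
    (h : ∀ a b, SBRel n a b → FreeMonoid.lift f a = FreeMonoid.lift f b) :
    SB n →* M :=
  Con.lift _ (FreeMonoid.lift f)
    (Con.conGen_le.2 fun a b hab => (Con.ker_rel _).2 (h a b hab))

@[simp] theorem SB.lift_mk {n : ℕ} {M : Type*} [Monoid M] (f : SBGen n → M)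
    (h : ∀ a b, SBRel n a b → FreeMonoid.lift f a = FreeMonoid.lift f b)
    (w : FreeMonoid (SBGen n)) :
    SB.lift f h (SB.mk w) = FreeMonoid.lift f w :=
  Con.lift_coe _ w

/-- The number of singular points (`τ`-letters) of a generator. -/
def degGen {n : ℕ} : SBGen n → Multiplicative ℕ
  | .tau _ => Multiplicative.ofAdd 1
  | _ => 1

/-- The monoid homomorphism `deg : SB n →* (ℕ, +)` counting singular points. -/
def degM {n : ℕ} : SB n →* Multiplicative ℕ :=
  SB.lift degGen (by
    rintro a b h
    cases h <;> simp [degGen, mul_comm])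
/-- Shifting generators by `k`, viewing `SB n` inside `SB N` (strands `k+1, …, k+n`). -/
def shiftGen {n : ℕ} (N k : ℕ) (h : k + n ≤ N) : SBGen n → SBGen N
  | .pos i => .pos ⟨k + i, by have := i.2; omega⟩
  | .neg i => .neg ⟨k + i, by have := i.2; omega⟩
  | .tau i => .tau ⟨k + i, by have := i.2; omega⟩

theorem shiftGen_rel {n : ℕ} (N k : ℕ) (h : k + n ≤ N) {a b : FreeMonoid (SBGen n)}
    (hab : SBRel n a b) :
    SBRel N (FreeMonoid.map (shiftGen N k h) a) (FreeMonoid.map (shiftGen N k h) b) := by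
  cases hab <;>
    simp only [map_mul, map_one, FreeMonoid.map_of, shiftGen] <;>
    first
      | exact SBRel.inv_right _
      | exact SBRel.inv_left _
      | exact SBRel.sigma_tau _
      | (rename_i i j hij; exact SBRel.braid _ _ (by simp; omega))
      | (rename_i i j hij; first
          | exact SBRel.braid_tau _ _ (by simp; omega)
          | exact SBRel.comm_ss _ _ (by simp; omega)
          | exact SBRel.comm_st _ _ (by simp; omega)
          | exact SBRel.comm_tt _ _ (by simp; omega))

/-- The monoid homomorphism `SB n →* SB N` placing a braid on the strands `k+1, …, k+n`. -/
def shiftHom {n : ℕ} (N k : ℕ) (h : k + n ≤ N) : SB n →* SB N :=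
  Con.lift _ (SB.mk.comp (FreeMonoid.map (shiftGen N k h)))
    (Con.conGen_le.2 fun a b hab => (Con.ker_rel _).2 (SB.sound (shiftGen_rel N k h hab)))

/-- The natural inclusion `SB n →* SB N` (adding trivial strands on the right). -/
def inclSB {n : ℕ} (N : ℕ) (h : n ≤ N) : SB n →* SB N := shiftHom N 0 (by omega)

/-- `α ∗ β`: the braid obtained by placing `β` (on `m` strands) above (to the right of)
`α` (on `n` strands), realized in `SB N` for `n + m ≤ N`. -/
def starIn {n m : ℕ} (N : ℕ) (h : n + m ≤ N) (α : SB n) (β : SB m) : SB N :=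
  inclSB N (by omega) α * shiftHom N n h β
@[simp] theorem shiftHom_mk {n : ℕ} (N k : ℕ) (h : k + n ≤ N) (w : FreeMonoid (SBGen n)) :
    shiftHom N k h (SB.mk w) = SB.mk (FreeMonoid.map (shiftGen N k h) w) :=
  Con.lift_coe _ w

theorem shiftHom_sG {n : ℕ} (N k : ℕ) (h : k + n ≤ N) (i : Fin (n - 1)) :
    shiftHom N k h (sG i) = sG ⟨k + i.1, by have := i.2; omega⟩ := rfl

theorem inclSB_sG {n : ℕ} (N : ℕ) (h : n ≤ N) (i : Fin (n - 1)) :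
    inclSB N h (sG i) = sG ⟨0 + i.1, by have := i.2; omega⟩ := rfl

noncomputable section

/-- The field `ℂ(q)` of rational functions over `ℂ` in the variable `q`. -/
abbrev Kq : Type := RatFunc ℂ

/-- The field `ℂ(q,z) = ℂ(q)(z)` of rational functions over `ℂ` in the variables `q, z`. -/
abbrev Lqz : Type := RatFunc Kq

/-- The variable `q`, as an element of `ℂ(q)`. -/
def qK : Kq := RatFunc.X

/-- The variable `z`, as an element of `ℂ(q,z)`. -/
def zL : Lqz := RatFunc.X

/-- The variable `q`, as an element of `ℂ(q,z)`. -/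
def qL : Lqz := algebraMap Kq Lqz qK

/-- The Hecke relations `σ_k² = (q-1)σ_k + q` in the monoid algebra `ℂ(q)[SB_n]`. -/
def HeckeRel (n : ℕ) : MonoidAlgebra Kq (SB n) → MonoidAlgebra Kq (SB n) → Prop :=
  fun x y => ∃ i : Fin (n - 1),
    x = MonoidAlgebra.of Kq (SB n) (sG i) ^ 2 ∧
    y = (qK - 1) • MonoidAlgebra.of Kq (SB n) (sG i) + qK • 1

/-- The singular Hecke algebra `H(SB_n)`: the quotient of `ℂ(q)[SB_n]` by the two-sided
ideal generated by the elements `σ_k² - (q-1)σ_k - q`. -/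
abbrev Hecke (n : ℕ) : Type := RingQuot (HeckeRel n)

/-- The image of a singular braid in the singular Hecke algebra. -/
def heckeOf {n : ℕ} (β : SB n) : Hecke n :=
  RingQuot.mkAlgHom Kq (HeckeRel n) (MonoidAlgebra.of Kq (SB n) β)

/-- `H_z(SB_n) := ℂ(q,z) ⊗_{ℂ(q)} H(SB_n)`. -/
abbrev HeckeZ (n : ℕ) : Type := Lqz ⊗[Kq] Hecke n

/-- The image of a singular braid in `H_z(SB_n)`. -/
def ofHZ {n : ℕ} (β : SB n) : HeckeZ n := (1 : Lqz) ⊗ₜ[Kq] heckeOf β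

/-- The algebra homomorphism `H(SB_n) → H(SB_{n+1})` induced by the natural inclusion
`SB_n ↪ SB_{n+1}`. -/
def heckeIncl (n : ℕ) : Hecke n →ₐ[Kq] Hecke (n + 1) :=
  RingQuot.liftAlgHom Kq
    ⟨((RingQuot.mkAlgHom Kq (HeckeRel (n + 1))).comp
        (MonoidAlgebra.mapDomainAlgHom Kq Kq (inclSB (n + 1) (Nat.le_succ n)))),
      by
        rintro x y ⟨i, rfl, rfl⟩
        have hi := i.2
        set i' : Fin ((n + 1) - 1) := ⟨0 + i.1, by omega⟩ with hi'
        have hgen : (MonoidAlgebra.mapDomainAlgHom Kq Kq (inclSB (n + 1) (Nat.le_succ n)))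
            (MonoidAlgebra.of Kq (SB n) (sG i)) = MonoidAlgebra.of Kq (SB (n + 1)) (sG i') := by
          rw [MonoidAlgebra.of_apply, MonoidAlgebra.mapDomainAlgHom_apply,
            MonoidAlgebra.mapDomain_single, inclSB_sG, MonoidAlgebra.of_apply]
        have hrel : HeckeRel (n + 1) (MonoidAlgebra.of Kq (SB (n + 1)) (sG i') ^ 2)
            ((qK - 1) • MonoidAlgebra.of Kq (SB (n + 1)) (sG i') + qK • 1) := ⟨i', rfl, rfl⟩
        have hmk := RingQuot.mkAlgHom_rel Kq hrel
        simp only [map_pow, map_add, map_smul, map_one] at hmk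
        simp only [AlgHom.coe_comp, Function.comp_apply, map_pow, map_add, map_smul, map_one,
          hgen]
        exact hmk⟩

/-- The algebra homomorphism `ι_n : H_z(SB_n) → H_z(SB_{n+1})`. -/
def iotaHZ (n : ℕ) : HeckeZ n →ₐ[Lqz] HeckeZ (n + 1) :=
  Algebra.TensorProduct.map (AlgHom.id Lqz Lqz) (heckeIncl n)
/-- The `ℂ(q)`-subspace `H(S_dB_n)` of the singular Hecke algebra spanned by the images of
the singular braids with `d` singular points. -/
def HSd (n d : ℕ) : Submodule Kq (Hecke n) :=
  Submodule.span Kq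
    {x | ∃ β : SB n, degM β = Multiplicative.ofAdd d ∧ x = heckeOf β}

/-- The `ℂ(q,z)`-subspace `H_z(S_dB_n)` of `H_z(SB_n)` spanned by the images of the singular
braids with `d` singular points. -/
def HzSd (n d : ℕ) : Submodule Lqz (HeckeZ n) :=
  Submodule.span Lqz
    {x | ∃ β : SB n, degM β = Multiplicative.ofAdd d ∧ x = ofHZ β}

/-- Strand counts: the positive natural numbers. -/
abbrev Idx : Type := {n : ℕ // 0 < n}

/-- The direct sum `⊕_{n ≥ 1} H_z(SB_n)`. -/
abbrev MV : Type := ⨁ i : Idx, HeckeZ i.1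

instance instAddCommGroupHeckeZ (n : ℕ) : AddCommGroup (HeckeZ n) := inferInstance
instance instModuleHeckeZ (n : ℕ) : Module Lqz (HeckeZ n) := inferInstance
instance instAddCommGroupMV : AddCommGroup MV := inferInstance
instance instModuleMV : Module Lqz MV := inferInstance

/-- The canonical inclusion of the `n`-th summand of `⊕_{n ≥ 1} H_z(SB_n)`. -/
def mvof (i : Idx) : HeckeZ i.1 →ₗ[Lqz] MV :=
  DirectSum.lof Lqz Idx (fun i => HeckeZ i.1) i

/-- Successor of a strand count. -/
def succI (i : Idx) : Idx := ⟨i.1 + 1, Nat.succ_pos _⟩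

/-- The generator `σ_n` of `SB_{n+1}`. -/
def sigmaLast (i : Idx) : SB (i.1 + 1) := sG ⟨i.1 - 1, Nat.sub_lt i.2 one_pos⟩

/-- The Markov relations in `⊕_{n ≥ 1} H_z(SB_n)`: trace relations, stabilization relations
and positive Markov relations. -/
def markovRels : Set MV :=
  {x | ∃ (i : Idx) (a b : HeckeZ i.1), x = mvof i (a * b) - mvof i (b * a)} ∪
  {x | ∃ (i : Idx) (a : HeckeZ i.1), x = mvof i a - mvof (succI i) (iotaHZ i.1 a)} ∪
  {x | ∃ (i : Idx) (a : HeckeZ i.1),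
    x = mvof (succI i) (iotaHZ i.1 a * ofHZ (sigmaLast i)) - zL • mvof i a}

/-- The Markov module `Markov(⊔SB)`. -/
abbrev Markov : Type := MV ⧸ Submodule.span Lqz markovRels

instance instAddCommGroupMarkov : AddCommGroup Markov := inferInstance
instance instModuleMarkov : Module Lqz Markov := inferInstance

/-- The class `[a, m]` in the Markov module of an element `a ∈ H_z(SB_m)`. -/
def markovClass (m : ℕ) (hm : 0 < m) (a : HeckeZ m) : Markov :=
  Submodule.Quotient.mk (mvof ⟨m, hm⟩ a)

/-- The class `[β, m]` in the Markov module of a singular braid `β ∈ SB_m`. -/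
def braidClass (m : ℕ) (hm : 0 < m) (β : SB m) : Markov :=
  markovClass m hm (ofHZ β)

/-- The direct sum `⊕_{n ≥ 1} H_z(S_dB_n)`. -/
abbrev MVD (d : ℕ) : Type := ⨁ i : Idx, ↥(HzSd i.1 d)

instance instAddCommGroupMVD (d : ℕ) : AddCommGroup (MVD d) := inferInstance
instance instModuleMVD (d : ℕ) : Module Lqz (MVD d) := inferInstance

/-- The canonical inclusion of the `n`-th summand of `⊕_{n ≥ 1} H_z(S_dB_n)`. -/
def mvdof (d : ℕ) (i : Idx) : ↥(HzSd i.1 d) →ₗ[Lqz] MVD d :=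
  DirectSum.lof Lqz Idx (fun i => ↥(HzSd i.1 d)) i

/-- The Markov relations in `⊕_{n ≥ 1} H_z(S_dB_n)`. -/
def markovRelsD (d : ℕ) : Set (MVD d) :=
  {x | ∃ (i : Idx) (k l : ℕ), k + l = d ∧ ∃ (a b : HeckeZ i.1),
    a ∈ HzSd i.1 k ∧ b ∈ HzSd i.1 l ∧
    ∃ (hab : a * b ∈ HzSd i.1 d) (hba : b * a ∈ HzSd i.1 d),
      x = mvdof d i ⟨a * b, hab⟩ - mvdof d i ⟨b * a, hba⟩} ∪
  {x | ∃ (i : Idx) (a : HeckeZ i.1) (ha : a ∈ HzSd i.1 d)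
      (ha' : iotaHZ i.1 a ∈ HzSd (i.1 + 1) d),
    x = mvdof d i ⟨a, ha⟩ - mvdof d (succI i) ⟨iotaHZ i.1 a, ha'⟩} ∪
  {x | ∃ (i : Idx) (a : HeckeZ i.1) (ha : a ∈ HzSd i.1 d)
      (ha' : iotaHZ i.1 a * ofHZ (sigmaLast i) ∈ HzSd (i.1 + 1) d),
    x = mvdof d (succI i) ⟨iotaHZ i.1 a * ofHZ (sigmaLast i), ha'⟩ - zL • mvdof d i ⟨a, ha⟩}

/-- The `d`-th Markov module `Markov(⊔S_dB)`. -/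
abbrev MarkovD (d : ℕ) : Type := MVD d ⧸ Submodule.span Lqz (markovRelsD d)

instance instAddCommGroupMarkovD (d : ℕ) : AddCommGroup (MarkovD d) := inferInstance
instance instModuleMarkovD (d : ℕ) : Module Lqz (MarkovD d) := inferInstance

/-- The class `[β, m]` in the `d`-th Markov module of a singular braid `β ∈ S_dB_m`
(defined to be `0` if `β` does not have exactly `d` singular points). -/
def classD (d m : ℕ) (hm : 0 < m) (β : SB m) : MarkovD d :=
  if h : degM β = Multiplicative.ofAdd d then
    Submodule.Quotient.mk (mvdof d ⟨m, hm⟩ ⟨ofHZ β, Submodule.subset_span ⟨β, h, rfl⟩⟩)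
  else 0
/-- The singular braid `W_{d,k} = τ_1 τ_3 ⋯ τ_{2k-1} (τ_{2k+1}σ_{2k+1}) ⋯ (τ_{2d-1}σ_{2d-1})`
in `SB_{2d}` (for `1 ≤ d` and `k ≤ d`). -/
def W (d k : ℕ) : SB (2 * d) :=
  ((List.range d).map (fun j =>
    if h : 2 * j < 2 * d - 1 then
      (if j < k then tauG ⟨2 * j, h⟩ else tauG ⟨2 * j, h⟩ * sG ⟨2 * j, h⟩)
    else 1)).prod

/-- The class of `W_{d,k}` in the `d`-th Markov module: `[W_{d,k}, 2d]` for `d ≥ 1`, and the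
class `[W_{0,0}, 1]` of the trivial braid on one strand for `d = 0`. -/
def WclassD (d k : ℕ) : MarkovD d :=
  if hd : d = 0 then hd ▸ classD 0 1 one_pos 1
  else classD d (2 * d) (by omega) (W d k)

/-- The singular braid `α_0 τ_{i_1} α_1 τ_{i_2} ⋯ τ_{i_d} α_d`. -/
def sbWord {m d : ℕ} (α : Fin (d + 1) → SB m) (idx : Fin d → Fin (m - 1)) : SB m :=
  α 0 * ((List.ofFn fun j : Fin d => tauG (idx j) * α j.succ).prod)

/-- The singular braid `α_0 τ_{i_1} α_1 ⋯ τ_{i_{k-1}} α_{k-1} x α_k τ_{i_{k+1}} ⋯ τ_{i_d} α_d`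
obtained from `α_0 τ_{i_1} α_1 ⋯ τ_{i_d} α_d` by replacing the letter `τ_{i_k}` by `x`. -/
def sbWordRepl {m d : ℕ} (α : Fin (d + 1) → SB m) (idx : Fin d → Fin (m - 1))
    (k : Fin d) (x : SB m) : SB m :=
  α 0 * ((List.ofFn fun j : Fin d => (if j = k then x else tauG (idx j)) * α j.succ).prod)

/-- `RepGen false i = 1` (deleting a `τ` letter) and `RepGen true i = σ_{i+1}` (replacing a
`τ` letter by the corresponding `σ` letter). -/
def RepGen {m : ℕ} (ε : Bool) (i : Fin (m - 1)) : SB m := if ε then sG i else 1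

/-- `IsG d ε g` says that the linear map `g : Markov(⊔S_dB) → Markov(⊔S_{d-1}B)` is induced
by the family of maps `f_{n,ε}` (deletion of one `τ` letter for `ε = false`, replacement of one
`τ` letter by the corresponding `σ` letter for `ε = true`), i.e. that
`g([β,n]) = [f_{n,ε}(β), n]` for every singular braid `β ∈ S_dB_n`. -/
def IsG (d : ℕ) (ε : Bool) (g : MarkovD d →ₗ[Lqz] MarkovD (d - 1)) : Prop :=
  ∀ (m : ℕ) (hm : 0 < m) (α : Fin (d + 1) → SB m) (idx : Fin d → Fin (m - 1)),
    (∀ j, degM (α j) = Multiplicative.ofAdd 0) →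
    g (classD d m hm (sbWord α idx)) =
      ∑ k : Fin d, classD (d - 1) m hm (sbWordRepl α idx k (RepGen ε (idx k)))

/-- The `ℂ(q,z)`-vector space freely spanned by the set `S_dB_m` of singular braids on `m`
strands with `d` singular points. -/
abbrev FreeSd (m d : ℕ) : Type :=
  {β : SB m // degM β = Multiplicative.ofAdd d} →₀ Lqz

/-- The basis element of `ℂ(q,z)[S_dB_m]` corresponding to a braid `β ∈ S_dB_m` (defined to
be `0` if `β` does not have exactly `d` singular points). -/
def freeElem {m : ℕ} (d : ℕ) (β : SB m) : FreeSd m d :=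
  if h : degM β = Multiplicative.ofAdd d then Finsupp.single ⟨β, h⟩ 1 else 0

/-- Iterated product (power) with respect to a given bilinear multiplication. -/
def powAux (mul : Markov →ₗ[Lqz] Markov →ₗ[Lqz] Markov) (one x : Markov) : ℕ → Markov
  | 0 => one
  | k + 1 => mul x (powAux mul one x k)
theorem SB.mk_surjective {n : ℕ} : Function.Surjective (SB.mk (n := n)) :=
  Con.mk'_surjective

@[simp] theorem heckeOf_mul {n : ℕ} (a b : SB n) :
    heckeOf (a * b) = heckeOf a * heckeOf b := by
  rw [heckeOf, heckeOf, heckeOf, ← map_mul, ← map_mul]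

@[simp] theorem heckeOf_one {n : ℕ} : heckeOf (1 : SB n) = 1 := by
  rw [heckeOf, map_one, map_one]

@[simp] theorem degM_sG {n : ℕ} (i : Fin (n-1)) : degM (sG i) = 1 := by
  simp [degM, sG, degGen]

@[simp] theorem degM_sInvG {n : ℕ} (i : Fin (n-1)) : degM (sInvG i) = 1 := by
  simp [degM, sInvG, degGen]

@[simp] theorem degM_tauG {n : ℕ} (i : Fin (n-1)) :
    degM (tauG i) = Multiplicative.ofAdd 1 := by
  simp [degM, tauG, degGen]

@[simp] theorem degM_RepGen {n : ℕ} (ε : Bool) (i : Fin (n-1)) :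
    degM (RepGen ε i) = 1 := by
  cases ε <;> simp [RepGen]

theorem sb_inv_right {m : ℕ} (i : Fin (m-1)) : sG i * sInvG i = (1 : SB m) := by
  simpa [sG, sInvG, map_mul] using SB.sound (SBRel.inv_right (n := m) i)

theorem sb_inv_left {m : ℕ} (i : Fin (m-1)) : sInvG i * sG i = (1 : SB m) := by
  simpa [sG, sInvG, map_mul] using SB.sound (SBRel.inv_left (n := m) i)

theorem sb_sigma_tau {m : ℕ} (i : Fin (m-1)) : sG i * tauG i = tauG i * sG i := by
  simpa [sG, tauG, map_mul] using SB.sound (SBRel.sigma_tau (n := m) i)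

theorem sb_braid {m : ℕ} (i j : Fin (m-1)) (h : (i : ℕ) + 1 = j ∨ (j : ℕ) + 1 = i) :
    sG i * sG j * sG i = sG j * sG i * sG j := by
  simpa [sG, map_mul] using SB.sound (SBRel.braid (n := m) i j h)

theorem sb_braid_tau {m : ℕ} (i j : Fin (m-1)) (h : (i : ℕ) + 1 = j ∨ (j : ℕ) + 1 = i) :
    sG i * sG j * tauG i = tauG j * sG i * sG j := by
  simpa [sG, tauG, map_mul] using SB.sound (SBRel.braid_tau (n := m) i j h)

theorem sb_comm_ss {m : ℕ} (i j : Fin (m-1)) (h : (i : ℕ) + 2 ≤ j ∨ (j : ℕ) + 2 ≤ i) :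
    sG i * sG j = sG j * sG i := by
  simpa [sG, map_mul] using SB.sound (SBRel.comm_ss (n := m) i j h)

theorem sb_comm_st {m : ℕ} (i j : Fin (m-1)) (h : (i : ℕ) + 2 ≤ j ∨ (j : ℕ) + 2 ≤ i) :
    sG i * tauG j = tauG j * sG i := by
  simpa [sG, tauG, map_mul] using SB.sound (SBRel.comm_st (n := m) i j h)

theorem sb_comm_tt {m : ℕ} (i j : Fin (m-1)) (h : (i : ℕ) + 2 ≤ j ∨ (j : ℕ) + 2 ≤ i) :
    tauG i * tauG j = tauG j * tauG i := by
  simpa [tauG, map_mul] using SB.sound (SBRel.comm_tt (n := m) i j h)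

/-- generators of the derivation extension -/
def fT {m : ℕ} (ε : Bool) : SBGen m → TrivSqZeroExt (Hecke m) (Hecke m)
  | .pos i => .inl (heckeOf (sG i))
  | .neg i => .inl (heckeOf (sInvG i))
  | .tau i => .inl (heckeOf (tauG i)) + .inr (heckeOf (RepGen ε i))

theorem fT_rel {m : ℕ} (ε : Bool) : ∀ a b, SBRel m a b →
    FreeMonoid.lift (fT ε) a = FreeMonoid.lift (fT ε) b := by
  rintro a b h
  cases h <;>
    simp only [map_mul, map_one, FreeMonoid.lift_eval_of, fT] <;>
    refine TrivSqZeroExt.ext ?_ ?_ <;>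
    simp [smul_eq_mul, MulOpposite.smul_eq_mul_unop, mul_add, add_mul]
  case inv_right.refine_1 i =>
    simpa using congrArg heckeOf (sb_inv_right i)
  case inv_left.refine_1 i =>
    simpa using congrArg heckeOf (sb_inv_left i)
  case sigma_tau.refine_1 i =>
    simpa using congrArg heckeOf (sb_sigma_tau i)
  case sigma_tau.refine_2 i =>
    cases ε <;> simp [RepGen]
  case braid.refine_1 i j h =>
    simpa using congrArg heckeOf (sb_braid i j h)
  case braid_tau.refine_1 i j h =>
    simpa using congrArg heckeOf (sb_braid_tau i j h)
  case braid_tau.refine_2 i j h =>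
    cases ε <;> simp [RepGen]
    simpa using congrArg heckeOf (sb_braid i j h)
  case comm_ss.refine_1 i j h =>
    simpa using congrArg heckeOf (sb_comm_ss i j h)
  case comm_st.refine_1 i j h =>
    simpa using congrArg heckeOf (sb_comm_st i j h)
  case comm_st.refine_2 i j h =>
    cases ε <;> simp [RepGen]
    simpa using congrArg heckeOf (sb_comm_ss i j h)
  case comm_tt.refine_1 i j h =>
    simpa using congrArg heckeOf (sb_comm_tt i j h)
  case comm_tt.refine_2 i j h =>
    cases ε <;> simp [RepGen]
    · exact add_comm _ _
    · rw [← heckeOf_mul, ← heckeOf_mul, ← heckeOf_mul, ← heckeOf_mul,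
        sb_comm_st i j h, ← sb_comm_st j i h.symm]
      exact add_comm _ _
/-- The monoid homomorphism `SB m →* T(Hecke m)`. -/
def PhiSB {m : ℕ} (ε : Bool) : SB m →* TrivSqZeroExt (Hecke m) (Hecke m) :=
  SB.lift (fT ε) (fT_rel ε)

theorem PhiSB_mk_of {m : ℕ} (ε : Bool) (g : SBGen m) :
    PhiSB ε (SB.mk (.of g)) = fT ε g := by
  simp [PhiSB]

/-- The algebra homomorphism `ℂ(q)[SB m] →ₐ T(Hecke m)`. -/
def PsiMA {m : ℕ} (ε : Bool) :
    MonoidAlgebra Kq (SB m) →ₐ[Kq] TrivSqZeroExt (Hecke m) (Hecke m) :=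
  MonoidAlgebra.lift Kq _ (SB m) (PhiSB ε)

theorem PsiMA_rel {m : ℕ} (ε : Bool) : ∀ ⦃x y⦄, HeckeRel m x y → PsiMA ε x = PsiMA ε y := by
  rintro x y ⟨i, rfl, rfl⟩
  have h0 : PsiMA (m := m) ε (MonoidAlgebra.of Kq (SB m) (sG i)) =
      TrivSqZeroExt.inl (heckeOf (sG i)) := by
    rw [PsiMA, MonoidAlgebra.lift_of]
    exact PhiSB_mk_of ε (.pos i)
  have hq : heckeOf (sG i) ^ 2 = (qK - 1) • heckeOf (sG i) + qK • 1 := by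
    have hr : HeckeRel m (MonoidAlgebra.of Kq (SB m) (sG i) ^ 2)
        ((qK - 1) • MonoidAlgebra.of Kq (SB m) (sG i) + qK • 1) := ⟨i, rfl, rfl⟩
    have := RingQuot.mkAlgHom_rel (S := Kq) (A := MonoidAlgebra Kq (SB m))
      (s := HeckeRel m) hr
    rw [map_pow, map_add, map_smul, map_smul, map_one] at this
    unfold heckeOf
    exact this
  rw [map_pow, map_add, map_smul, map_smul, map_one, h0, TrivSqZeroExt.inl_pow, hq]
  refine TrivSqZeroExt.ext ?_ ?_ <;>
    simp [TrivSqZeroExt.fst_smul, TrivSqZeroExt.snd_smul]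

/-- The algebra homomorphism `Hecke m →ₐ T(Hecke m)`. -/
def PsiH {m : ℕ} (ε : Bool) : Hecke m →ₐ[Kq] TrivSqZeroExt (Hecke m) (Hecke m) :=
  RingQuot.liftAlgHom Kq ⟨PsiMA ε, PsiMA_rel ε⟩

theorem PsiH_heckeOf {m : ℕ} (ε : Bool) (β : SB m) :
    PsiH ε (heckeOf β) = PhiSB ε β := by
  rw [heckeOf, PsiH, RingQuot.liftAlgHom_mkAlgHom_apply, PsiMA, MonoidAlgebra.lift_of]

theorem fst_PhiSB {m : ℕ} (ε : Bool) (β : SB m) : (PhiSB ε β).fst = heckeOf β := by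
  obtain ⟨w, rfl⟩ := SB.mk_surjective β
  induction w using FreeMonoid.inductionOn with
  | one => simp [map_one]
  | of g => rw [PhiSB_mk_of]; cases g <;> simp [fT, sG, sInvG, tauG]
  | mul x y ihx ihy => rw [map_mul, map_mul, TrivSqZeroExt.fst_mul, ihx, ihy, heckeOf_mul]

theorem fst_PsiH {m : ℕ} (ε : Bool) (x : Hecke m) : (PsiH ε x).fst = x := by
  have h : (TrivSqZeroExt.fstHom Kq (Hecke m) (Hecke m)).comp (PsiH ε) =
      AlgHom.id Kq (Hecke m) := by
    apply RingQuot.ringQuot_ext'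
    apply MonoidAlgebra.algHom_ext
    intro β
    show TrivSqZeroExt.fstHom Kq (Hecke m) (Hecke m) (PsiH ε (heckeOf β)) = heckeOf β
    rw [PsiH_heckeOf]
    exact fst_PhiSB ε β
    exact Subsingleton.elim _ _
  exact DFunLike.congr_fun h x

/-- The derivation `Dq` on the singular Hecke algebra. -/
def Dq {m : ℕ} (ε : Bool) : Hecke m →ₗ[Kq] Hecke m where
  toFun x := (PsiH ε x).snd
  map_add' x y := by
    show (PsiH ε (x + y)).snd = (PsiH ε x).snd + (PsiH ε y).snd
    rw [map_add, TrivSqZeroExt.snd_add]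
  map_smul' k x := by
    show (PsiH ε (k • x)).snd = (RingHom.id Kq) k • (PsiH ε x).snd
    rw [map_smul, TrivSqZeroExt.snd_smul]; rfl

theorem Dq_apply {m : ℕ} (ε : Bool) (x : Hecke m) : Dq ε x = (PsiH ε x).snd := rfl

theorem Dq_mul {m : ℕ} (ε : Bool) (x y : Hecke m) :
    Dq ε (x * y) = x * Dq ε y + Dq ε x * y := by
  rw [Dq_apply, map_mul, TrivSqZeroExt.snd_mul, fst_PsiH, fst_PsiH,
    smul_eq_mul, MulOpposite.smul_eq_mul_unop, MulOpposite.unop_op]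
  rfl

@[simp] theorem Dq_one {m : ℕ} (ε : Bool) : Dq ε (1 : Hecke m) = 0 := by
  rw [Dq_apply, map_one, TrivSqZeroExt.snd_one]

@[simp] theorem Dq_sG {m : ℕ} (ε : Bool) (i : Fin (m-1)) : Dq ε (heckeOf (sG i)) = 0 := by
  rw [Dq_apply, PsiH_heckeOf, sG, PhiSB_mk_of]
  simp [fT]

@[simp] theorem Dq_sInvG {m : ℕ} (ε : Bool) (i : Fin (m-1)) :
    Dq ε (heckeOf (sInvG i)) = 0 := by
  rw [Dq_apply, PsiH_heckeOf, sInvG, PhiSB_mk_of]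
  simp [fT]

@[simp] theorem Dq_tauG {m : ℕ} (ε : Bool) (i : Fin (m-1)) :
    Dq ε (heckeOf (tauG i)) = heckeOf (RepGen ε i) := by
  rw [Dq_apply, PsiH_heckeOf, tauG, PhiSB_mk_of]
  simp [fT]

theorem heckeOf_mem_HSd {m : ℕ} {β : SB m} {e : ℕ} (h : degM β = Multiplicative.ofAdd e) :
    heckeOf β ∈ HSd m e := Submodule.subset_span ⟨β, h, rfl⟩

theorem mem_HSd_cast {m : ℕ} {x : Hecke m} {e e' : ℕ} (h : e = e') (hx : x ∈ HSd m e) :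
    x ∈ HSd m e' := h ▸ hx

theorem HSd_mul_right {m : ℕ} {x : Hecke m} {e : ℕ} (hx : x ∈ HSd m e)
    {γ : SB m} {c : ℕ} (hγ : degM γ = Multiplicative.ofAdd c) :
    x * heckeOf γ ∈ HSd m (e + c) := by
  induction hx using Submodule.span_induction with
  | mem y hy =>
    obtain ⟨β, hβ, rfl⟩ := hy
    exact Submodule.subset_span ⟨β * γ, by rw [map_mul, hβ, hγ, ← ofAdd_add], by rw [heckeOf_mul]⟩
  | zero => simpa using (HSd m (e + c)).zero_mem
  | add y z _ _ hy hz => rw [add_mul]; exact (HSd m (e + c)).add_mem hy hz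
  | smul k y _ hy => rw [smul_mul_assoc]; exact (HSd m (e + c)).smul_mem k hy

theorem HSd_mul_left {m : ℕ} {x : Hecke m} {e : ℕ} (hx : x ∈ HSd m e)
    {γ : SB m} {c : ℕ} (hγ : degM γ = Multiplicative.ofAdd c) :
    heckeOf γ * x ∈ HSd m (c + e) := by
  induction hx using Submodule.span_induction with
  | mem y hy =>
    obtain ⟨β, hβ, rfl⟩ := hy
    exact Submodule.subset_span ⟨γ * β, by rw [map_mul, hβ, hγ, ← ofAdd_add], by rw [heckeOf_mul]⟩
  | zero => simpa using (HSd m (c + e)).zero_mem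
  | add y z _ _ hy hz => rw [mul_add]; exact (HSd m (c + e)).add_mem hy hz
  | smul k y _ hy => rw [mul_smul_comm]; exact (HSd m (c + e)).smul_mem k hy

theorem Dq_deg {m : ℕ} (ε : Bool) (w : FreeMonoid (SBGen m)) :
    ∀ e : ℕ, degM (SB.mk w) = Multiplicative.ofAdd e →
      Dq ε (heckeOf (SB.mk w)) ∈ HSd m (e - 1) ∧
      (e = 0 → Dq ε (heckeOf (SB.mk w)) = 0) := by
  induction w using FreeMonoid.inductionOn with
  | one =>
    intro e he
    rw [map_one] at he ⊢
    rw [heckeOf_one, Dq_one]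
    exact ⟨(HSd m (e - 1)).zero_mem, fun _ => rfl⟩
  | of g =>
    intro e he
    cases g with
    | pos i =>
      rw [show SB.mk (FreeMonoid.of (SBGen.pos i)) = sG i from rfl] at he ⊢
      rw [Dq_sG]
      exact ⟨(HSd m (e - 1)).zero_mem, fun _ => rfl⟩
    | neg i =>
      rw [show SB.mk (FreeMonoid.of (SBGen.neg i)) = sInvG i from rfl] at he ⊢
      rw [Dq_sInvG]
      exact ⟨(HSd m (e - 1)).zero_mem, fun _ => rfl⟩
    | tau i =>
      rw [show SB.mk (FreeMonoid.of (SBGen.tau i)) = tauG i from rfl] at he ⊢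
      rw [degM_tauG] at he
      have he1 : e = 1 := by
        have := Multiplicative.ofAdd.injective he
        omega
      subst he1
      rw [Dq_tauG]
      exact ⟨heckeOf_mem_HSd (degM_RepGen ε i), fun h => absurd h one_ne_zero⟩
  | mul x y ihx ihy =>
    intro e he
    obtain ⟨ex, hex⟩ : ∃ a, degM (SB.mk x) = Multiplicative.ofAdd a :=
      ⟨Multiplicative.toAdd (degM (SB.mk x)), rfl⟩
    obtain ⟨ey, hey⟩ : ∃ a, degM (SB.mk y) = Multiplicative.ofAdd a :=
      ⟨Multiplicative.toAdd (degM (SB.mk y)), rfl⟩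
    rw [map_mul, map_mul, hex, hey, ← ofAdd_add] at he
    have hsum : ex + ey = e := Multiplicative.ofAdd.injective he
    obtain ⟨hx1, hx2⟩ := ihx ex hex
    obtain ⟨hy1, hy2⟩ := ihy ey hey
    rw [map_mul, heckeOf_mul, Dq_mul]
    constructor
    · refine (HSd m (e - 1)).add_mem ?_ ?_
      · rcases Nat.eq_zero_or_pos ey with h0 | hpos
        · rw [hy2 h0, mul_zero]; exact (HSd m (e - 1)).zero_mem
        · exact mem_HSd_cast (by omega) (HSd_mul_left hy1 hex)
      · rcases Nat.eq_zero_or_pos ex with h0 | hpos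
        · rw [hx2 h0, zero_mul]; exact (HSd m (e - 1)).zero_mem
        · exact mem_HSd_cast (by omega) (HSd_mul_right hx1 hey)
    · intro h0
      rw [hx2 (by omega), hy2 (by omega), mul_zero, zero_mul, add_zero]

theorem Dq_mem {m : ℕ} (ε : Bool) {β : SB m} {e : ℕ}
    (h : degM β = Multiplicative.ofAdd e) : Dq ε (heckeOf β) ∈ HSd m (e - 1) := by
  obtain ⟨w, rfl⟩ := SB.mk_surjective β
  exact (Dq_deg ε w e h).1

theorem Dq_zero_of_deg0 {m : ℕ} (ε : Bool) {β : SB m}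
    (h : degM β = Multiplicative.ofAdd 0) : Dq ε (heckeOf β) = 0 := by
  obtain ⟨w, rfl⟩ := SB.mk_surjective β
  exact (Dq_deg ε w 0 h).2 rfl
theorem Hecke.inductionOn {n : ℕ} {P : Hecke n → Prop} (x : Hecke n) (h0 : P 0)
    (hg : ∀ β : SB n, P (heckeOf β))
    (hadd : ∀ x y, P x → P y → P (x + y))
    (hsmul : ∀ (k : Kq) (x), P x → P (k • x)) : P x := by
  obtain ⟨y, rfl⟩ := RingQuot.mkAlgHom_surjective Kq (HeckeRel n) x
  induction y using MonoidAlgebra.induction with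
  | zero => simpa using h0
  | single_add a b f _ _ hf =>
    rw [map_add]
    refine hadd _ _ ?_ hf
    have : (MonoidAlgebra.single a b : MonoidAlgebra Kq (SB n)) = b • MonoidAlgebra.single a 1 := by
      rw [MonoidAlgebra.smul_single, smul_eq_mul, mul_one]
    rw [this, map_smul]
    exact hsmul b _ (hg a)

/-- `D` after base change to `ℂ(q,z)`. -/
def DZ {m : ℕ} (ε : Bool) : HeckeZ m →ₗ[Lqz] HeckeZ m :=
  LinearMap.baseChange Lqz (Dq ε)

theorem DZ_tmul {m : ℕ} (ε : Bool) (l : Lqz) (h : Hecke m) :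
    DZ ε (l ⊗ₜ[Kq] h) = l ⊗ₜ[Kq] (Dq ε h) := rfl

theorem DZ_ofHZ {m : ℕ} (ε : Bool) (β : SB m) :
    DZ ε (ofHZ β) = (1 : Lqz) ⊗ₜ[Kq] (Dq ε (heckeOf β)) := rfl

theorem ofHZ_mul {m : ℕ} (a b : SB m) : ofHZ (a * b) = ofHZ a * ofHZ b := by
  rw [ofHZ, ofHZ, ofHZ, heckeOf_mul, Algebra.TensorProduct.tmul_mul_tmul, one_mul]

theorem DZ_mul {m : ℕ} (ε : Bool) (x y : HeckeZ m) :
    DZ ε (x * y) = x * DZ ε y + DZ ε x * y := by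
  induction x using TensorProduct.induction_on with
  | zero => simp
  | tmul l h =>
    induction y using TensorProduct.induction_on with
    | zero => simp
    | tmul l' h' =>
      rw [Algebra.TensorProduct.tmul_mul_tmul, DZ_tmul, DZ_tmul, DZ_tmul, Dq_mul,
        TensorProduct.tmul_add, Algebra.TensorProduct.tmul_mul_tmul,
        Algebra.TensorProduct.tmul_mul_tmul]
    | add y₁ y₂ ih₁ ih₂ =>
      simp only [mul_add, map_add, ih₁, ih₂]
      abel
  | add x₁ x₂ ih₁ ih₂ =>
    simp only [add_mul, map_add, ih₁, ih₂]
    abel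

theorem tmul_mem_HzSd {m : ℕ} {x : Hecke m} {e : ℕ} (hx : x ∈ HSd m e) :
    (1 : Lqz) ⊗ₜ[Kq] x ∈ HzSd m e := by
  induction hx using Submodule.span_induction with
  | mem y hy =>
    obtain ⟨β, hβ, rfl⟩ := hy
    exact Submodule.subset_span ⟨β, hβ, rfl⟩
  | zero => rw [TensorProduct.tmul_zero]; exact (HzSd m e).zero_mem
  | add y z _ _ hy hz => rw [TensorProduct.tmul_add]; exact (HzSd m e).add_mem hy hz
  | smul k y _ hy =>
    have h1 : (1 : Lqz) ⊗ₜ[Kq] (k • y) = (algebraMap Kq Lqz k) • ((1 : Lqz) ⊗ₜ[Kq] y) := by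
      rw [← TensorProduct.smul_tmul, TensorProduct.smul_tmul']
      congr 1
      rw [Algebra.smul_def, smul_eq_mul]
    rw [h1]
    exact (HzSd m e).smul_mem _ hy

theorem ofHZ_mem_HzSd {m : ℕ} {β : SB m} {e : ℕ} (h : degM β = Multiplicative.ofAdd e) :
    ofHZ β ∈ HzSd m e := Submodule.subset_span ⟨β, h, rfl⟩

theorem DZ_mem {m : ℕ} (ε : Bool) {x : HeckeZ m} {e : ℕ} (hx : x ∈ HzSd m e) :
    DZ ε x ∈ HzSd m (e - 1) := by
  induction hx using Submodule.span_induction with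
  | mem y hy =>
    obtain ⟨β, hβ, rfl⟩ := hy
    rw [DZ_ofHZ]
    exact tmul_mem_HzSd (Dq_mem ε hβ)
  | zero => rw [map_zero]; exact (HzSd m (e-1)).zero_mem
  | add y z _ _ hy hz => rw [map_add]; exact (HzSd m (e-1)).add_mem hy hz
  | smul k y _ hy => rw [map_smul]; exact (HzSd m (e-1)).smul_mem k hy

theorem DZ_zero_of_deg0 {m : ℕ} (ε : Bool) {x : HeckeZ m} (hx : x ∈ HzSd m 0) :
    DZ ε x = 0 := by
  induction hx using Submodule.span_induction with
  | mem y hy =>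
    obtain ⟨β, hβ, rfl⟩ := hy
    rw [DZ_ofHZ, Dq_zero_of_deg0 ε hβ, TensorProduct.tmul_zero]
  | zero => rw [map_zero]
  | add y z _ _ hy hz => rw [map_add, hy, hz, add_zero]
  | smul k y _ hy => rw [map_smul, hy, smul_zero]

theorem ofHZ_mul_mem {m : ℕ} {β : SB m} {k : ℕ} (hβ : degM β = Multiplicative.ofAdd k)
    {y : HeckeZ m} {l : ℕ} (hy : y ∈ HzSd m l) : ofHZ β * y ∈ HzSd m (k + l) := by
  induction hy using Submodule.span_induction with
  | mem z hz =>
    obtain ⟨γ, hγ, rfl⟩ := hz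
    rw [← ofHZ_mul]
    exact ofHZ_mem_HzSd (by rw [map_mul, hβ, hγ, ← ofAdd_add])
  | zero => rw [mul_zero]; exact (HzSd m (k+l)).zero_mem
  | add y z _ _ hy hz => rw [mul_add]; exact (HzSd m (k+l)).add_mem hy hz
  | smul c y _ hy => rw [mul_smul_comm]; exact (HzSd m (k+l)).smul_mem c hy

theorem HzSd_mul_mem {m : ℕ} {x y : HeckeZ m} {k l : ℕ}
    (hx : x ∈ HzSd m k) (hy : y ∈ HzSd m l) : x * y ∈ HzSd m (k + l) := by
  induction hx using Submodule.span_induction with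
  | mem z hz =>
    obtain ⟨β, hβ, rfl⟩ := hz
    exact ofHZ_mul_mem hβ hy
  | zero => rw [zero_mul]; exact (HzSd m (k+l)).zero_mem
  | add x₁ x₂ _ _ h₁ h₂ => rw [add_mul]; exact (HzSd m (k+l)).add_mem h₁ h₂
  | smul c x₁ _ h₁ => rw [smul_mul_assoc]; exact (HzSd m (k+l)).smul_mem c h₁

theorem heckeIncl_heckeOf {n : ℕ} (β : SB n) :
    heckeIncl n (heckeOf β) = heckeOf (inclSB (n+1) (Nat.le_succ n) β) := by
  rw [heckeOf, heckeIncl, RingQuot.liftAlgHom_mkAlgHom_apply]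
  rw [AlgHom.coe_comp, Function.comp_apply, MonoidAlgebra.of_apply,
    MonoidAlgebra.mapDomainAlgHom_apply, MonoidAlgebra.mapDomain_single]
  rfl

theorem inclSB_tauG {n N : ℕ} (h : n ≤ N) (i : Fin (n-1)) :
    inclSB N h (tauG i) = tauG ⟨0 + i.1, by have := i.2; omega⟩ := rfl

theorem inclSB_sInvG {n N : ℕ} (h : n ≤ N) (i : Fin (n-1)) :
    inclSB N h (sInvG i) = sInvG ⟨0 + i.1, by have := i.2; omega⟩ := rfl

theorem degM_inclSB {n N : ℕ} (h : n ≤ N) (β : SB n) :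
    degM (inclSB N h β) = degM β := by
  obtain ⟨w, rfl⟩ := SB.mk_surjective β
  induction w using FreeMonoid.inductionOn with
  | one => simp only [map_one]
  | of g =>
    cases g with
    | pos i => rw [show SB.mk (FreeMonoid.of (SBGen.pos i)) = sG i from rfl, inclSB_sG]; simp
    | neg i => rw [show SB.mk (FreeMonoid.of (SBGen.neg i)) = sInvG i from rfl, inclSB_sInvG]; simp
    | tau i => rw [show SB.mk (FreeMonoid.of (SBGen.tau i)) = tauG i from rfl, inclSB_tauG]; simp
  | mul x y ihx ihy => simp only [map_mul, ihx, ihy]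

theorem inclSB_RepGen {n : ℕ} (ε : Bool) (i : Fin (n-1)) :
    inclSB (n+1) (Nat.le_succ n) (RepGen ε i) =
      RepGen ε ⟨0 + i.1, by have := i.2; omega⟩ := by
  cases ε
  · simp only [RepGen, Bool.false_eq_true, if_false, map_one]
  · simp only [RepGen, if_true]
    exact inclSB_sG _ _ i

theorem Dq_heckeIncl {n : ℕ} (ε : Bool) (x : Hecke n) :
    Dq ε (heckeIncl n x) = heckeIncl n (Dq ε x) := by
  induction x using Hecke.inductionOn with
  | h0 => simp only [map_zero]
  | hadd x y ihx ihy => simp only [map_add, ihx, ihy]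
  | hsmul k x ih => simp only [map_smul, ih]
  | hg β =>
    obtain ⟨w, rfl⟩ := SB.mk_surjective β
    induction w using FreeMonoid.inductionOn with
    | one => rw [map_one, heckeOf_one, map_one, Dq_one, Dq_one, map_zero]
    | of g =>
      cases g with
      | pos i =>
        rw [show SB.mk (FreeMonoid.of (SBGen.pos i)) = sG i from rfl,
          heckeIncl_heckeOf, inclSB_sG, Dq_sG, Dq_sG, map_zero]
      | neg i =>
        rw [show SB.mk (FreeMonoid.of (SBGen.neg i)) = sInvG i from rfl,
          heckeIncl_heckeOf, inclSB_sInvG, Dq_sInvG, Dq_sInvG, map_zero]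
      | tau i =>
        rw [show SB.mk (FreeMonoid.of (SBGen.tau i)) = tauG i from rfl,
          heckeIncl_heckeOf, inclSB_tauG, Dq_tauG, Dq_tauG, heckeIncl_heckeOf,
          inclSB_RepGen]
    | mul x y ihx ihy =>
      simp only [map_mul, heckeOf_mul, Dq_mul, map_add, ihx, ihy]

theorem iotaHZ_ofHZ {n : ℕ} (β : SB n) :
    iotaHZ n (ofHZ β) = ofHZ (inclSB (n+1) (Nat.le_succ n) β) := by
  rw [ofHZ, iotaHZ, Algebra.TensorProduct.map_tmul, heckeIncl_heckeOf, map_one]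
  rfl

theorem DZ_iotaHZ {n : ℕ} (ε : Bool) (x : HeckeZ n) :
    DZ ε (iotaHZ n x) = iotaHZ n (DZ ε x) := by
  induction x using TensorProduct.induction_on with
  | zero => rw [map_zero, map_zero, map_zero, map_zero]
  | tmul l h =>
    rw [iotaHZ, Algebra.TensorProduct.map_tmul, DZ_tmul, DZ_tmul, Dq_heckeIncl,
      Algebra.TensorProduct.map_tmul]
  | add x y ihx ihy => rw [map_add, map_add, ihx, ihy, map_add, map_add]

theorem iotaHZ_mem {n : ℕ} {x : HeckeZ n} {e : ℕ} (hx : x ∈ HzSd n e) :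
    iotaHZ n x ∈ HzSd (n+1) e := by
  induction hx using Submodule.span_induction with
  | mem y hy =>
    obtain ⟨β, hβ, rfl⟩ := hy
    rw [iotaHZ_ofHZ]
    exact ofHZ_mem_HzSd (by rw [degM_inclSB]; exact hβ)
  | zero => rw [map_zero]; exact (HzSd (n+1) e).zero_mem
  | add y z _ _ hy hz => rw [map_add]; exact (HzSd (n+1) e).add_mem hy hz
  | smul k y _ hy => rw [map_smul]; exact (HzSd (n+1) e).smul_mem k hy

theorem DZ_sigmaLast (i : Idx) (ε : Bool) : DZ ε (ofHZ (sigmaLast i)) = 0 := by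
  rw [sigmaLast, DZ_ofHZ, Dq_sG, TensorProduct.tmul_zero]

theorem sbWord_zero {m : ℕ} (α : Fin 1 → SB m) (idx : Fin 0 → Fin (m-1)) :
    sbWord α idx = α 0 := by
  simp [sbWord]

theorem sbWord_succ {m d : ℕ} (α : Fin (d+2) → SB m) (idx : Fin (d+1) → Fin (m-1)) :
    sbWord α idx = α 0 * tauG (idx 0) *
      sbWord (fun j => α j.succ) (fun j => idx j.succ) := by
  rw [sbWord, sbWord, List.ofFn_succ]
  simp [mul_assoc]

theorem sbWordRepl_zero' {m d : ℕ} (α : Fin (d+2) → SB m) (idx : Fin (d+1) → Fin (m-1))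
    (x : SB m) :
    sbWordRepl α idx 0 x = α 0 * x *
      sbWord (fun j => α j.succ) (fun j => idx j.succ) := by
  rw [sbWordRepl, sbWord, List.ofFn_succ]
  simp [Fin.succ_ne_zero, mul_assoc]

theorem sbWordRepl_succ' {m d : ℕ} (α : Fin (d+2) → SB m) (idx : Fin (d+1) → Fin (m-1))
    (k : Fin d) (x : SB m) :
    sbWordRepl α idx k.succ x = α 0 * tauG (idx 0) *
      sbWordRepl (fun j => α j.succ) (fun j => idx j.succ) k x := by
  rw [sbWordRepl, sbWordRepl, List.ofFn_succ]
  have h0 : (0 : Fin (d+1)) ≠ k.succ := (Fin.succ_ne_zero k).symm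
  simp [h0, Fin.succ_inj, mul_assoc]

theorem sbWord_cons_tau {m d : ℕ} (α : Fin (d+1) → SB m) (idx : Fin d → Fin (m-1))
    (i : Fin (m-1)) :
    sbWord (Fin.cons 1 α) (Fin.cons i idx) = tauG i * sbWord α idx := by
  rw [sbWord, sbWord, List.ofFn_succ]
  simp [Fin.cons_succ, Fin.cons_zero, mul_assoc]

theorem sbWord_mul_left {m d : ℕ} (α : Fin (d+1) → SB m) (idx : Fin d → Fin (m-1))
    (γ : SB m) :
    sbWord (Function.update α 0 (γ * α 0)) idx = γ * sbWord α idx := by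
  rw [sbWord, sbWord]
  have h1 : ∀ j : Fin d, Function.update α 0 (γ * α 0) j.succ = α j.succ := fun j =>
    Function.update_of_ne (Fin.succ_ne_zero j) _ _
  simp [h1, Function.update_self, mul_assoc]
theorem degM_sbWord {m : ℕ} : ∀ {d : ℕ} (α : Fin (d+1) → SB m) (idx : Fin d → Fin (m-1)),
    (∀ j, degM (α j) = Multiplicative.ofAdd 0) →
    degM (sbWord α idx) = Multiplicative.ofAdd d
  | 0, α, idx, hα => by rw [sbWord_zero]; exact hα 0
  | (d+1), α, idx, hα => by
    rw [sbWord_succ, map_mul, map_mul, hα 0, degM_tauG,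
      degM_sbWord (fun j => α j.succ) (fun j => idx j.succ) (fun j => hα j.succ)]
    rw [← ofAdd_add, ← ofAdd_add]
    exact congrArg Multiplicative.ofAdd (by omega)

theorem degM_sbWordRepl {m : ℕ} : ∀ {d : ℕ} (α : Fin (d+2) → SB m)
    (idx : Fin (d+1) → Fin (m-1)) (k : Fin (d+1)) (x : SB m),
    (∀ j, degM (α j) = Multiplicative.ofAdd 0) → degM x = Multiplicative.ofAdd 0 →
    degM (sbWordRepl α idx k x) = Multiplicative.ofAdd d
  | 0, α, idx, k, x, hα, hx => by
    obtain rfl : k = 0 := Fin.ext (by omega)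
    rw [sbWordRepl_zero', sbWord_zero, map_mul, map_mul, hα 0, hx]
    rw [hα (Fin.succ 0)]
    rfl
  | (d+1), α, idx, k, x, hα, hx => by
    induction k using Fin.cases with
    | zero =>
      rw [sbWordRepl_zero', map_mul, map_mul, hα 0, hx,
        degM_sbWord (fun j => α j.succ) (fun j => idx j.succ) (fun j => hα j.succ)]
      rw [← ofAdd_add, ← ofAdd_add]
      exact congrArg Multiplicative.ofAdd (by omega)
    | succ k =>
      rw [sbWordRepl_succ', map_mul, map_mul, hα 0, degM_tauG,
        degM_sbWordRepl (fun j => α j.succ) (fun j => idx j.succ) k x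
          (fun j => hα j.succ) hx]
      rw [← ofAdd_add, ← ofAdd_add]
      exact congrArg Multiplicative.ofAdd (by omega)

theorem Dq_sbWord {m : ℕ} (ε : Bool) : ∀ {d : ℕ} (α : Fin (d+1) → SB m)
    (idx : Fin d → Fin (m-1)), (∀ j, degM (α j) = Multiplicative.ofAdd 0) →
    Dq ε (heckeOf (sbWord α idx)) =
      ∑ k : Fin d, heckeOf (sbWordRepl α idx k (RepGen ε (idx k)))
  | 0, α, idx, hα => by
    rw [sbWord_zero, Dq_zero_of_deg0 ε (hα 0)]
    simp
  | (d+1), α, idx, hα => by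
    rw [sbWord_succ, heckeOf_mul, heckeOf_mul, Dq_mul, Dq_mul,
      Dq_zero_of_deg0 ε (hα 0), Dq_tauG, zero_mul, add_zero,
      Dq_sbWord ε (fun j => α j.succ) (fun j => idx j.succ) (fun j => hα j.succ),
      Fin.sum_univ_succ, add_comm]
    congr 1
    · rw [sbWordRepl_zero', heckeOf_mul, heckeOf_mul]
    · rw [Finset.mul_sum]
      refine Finset.sum_congr rfl fun k _ => ?_
      rw [sbWordRepl_succ', heckeOf_mul, heckeOf_mul]

theorem DZ_sbWord {m d : ℕ} (ε : Bool) (α : Fin (d+1) → SB m) (idx : Fin d → Fin (m-1))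
    (hα : ∀ j, degM (α j) = Multiplicative.ofAdd 0) :
    DZ ε (ofHZ (sbWord α idx)) =
      ∑ k : Fin d, ofHZ (sbWordRepl α idx k (RepGen ε (idx k))) := by
  rw [DZ_ofHZ, Dq_sbWord ε α idx hα, TensorProduct.tmul_sum]
  rfl

theorem exists_sbWord {m : ℕ} (w : FreeMonoid (SBGen m)) :
    ∃ (e : ℕ) (α : Fin (e+1) → SB m) (idx : Fin e → Fin (m-1)),
      (∀ j, degM (α j) = Multiplicative.ofAdd 0) ∧ SB.mk w = sbWord α idx := by
  induction w using FreeMonoid.recOn with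
  | one =>
    refine ⟨0, fun _ => 1, Fin.elim0, fun j => map_one degM, ?_⟩
    rw [map_one, sbWord_zero]
  | of_mul g v ih =>
    obtain ⟨e, α, idx, hα, hw⟩ := ih
    have hmk : SB.mk (FreeMonoid.of g * v) = SB.mk (FreeMonoid.of g) * SB.mk v := map_mul _ _ _
    cases g with
    | pos i =>
      refine ⟨e, Function.update α 0 (sG i * α 0), idx, ?_, ?_⟩
      · intro j
        rcases eq_or_ne j 0 with rfl | hj
        · rw [Function.update_self, map_mul, degM_sG, hα 0, one_mul]
        · rw [Function.update_of_ne hj]; exact hα j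
      · rw [hmk, hw, sbWord_mul_left]; rfl
    | neg i =>
      refine ⟨e, Function.update α 0 (sInvG i * α 0), idx, ?_, ?_⟩
      · intro j
        rcases eq_or_ne j 0 with rfl | hj
        · rw [Function.update_self, map_mul, degM_sInvG, hα 0, one_mul]
        · rw [Function.update_of_ne hj]; exact hα j
      · rw [hmk, hw, sbWord_mul_left]; rfl
    | tau i =>
      refine ⟨e + 1, Fin.cons 1 α, Fin.cons i idx, ?_, ?_⟩
      · intro j
        induction j using Fin.cases with
        | zero => rw [Fin.cons_zero]; exact map_one degM
        | succ j => rw [Fin.cons_succ]; exact hα j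
      · rw [hmk, hw, sbWord_cons_tau]; rfl
theorem mem_HzSd_cast {m : ℕ} {x : HeckeZ m} {e e' : ℕ} (h : e = e') (hx : x ∈ HzSd m e) :
    x ∈ HzSd m e' := h ▸ hx

theorem mvdof_congr {d : ℕ} (i : Idx) {x y : HeckeZ i.1} (h : x = y)
    (hx : x ∈ HzSd i.1 d) (hy : y ∈ HzSd i.1 d) :
    mvdof d i ⟨x, hx⟩ = mvdof d i ⟨y, hy⟩ := by subst h; rfl

theorem mvdof_add' {d : ℕ} (i : Idx) {x y : HeckeZ i.1} (hx : x ∈ HzSd i.1 d)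
    (hy : y ∈ HzSd i.1 d) (hxy : x + y ∈ HzSd i.1 d) :
    mvdof d i ⟨x + y, hxy⟩ = mvdof d i ⟨x, hx⟩ + mvdof d i ⟨y, hy⟩ := by
  rw [← map_add]; rfl

/-- The lift of the derivations to `⊕ₙ H_z(S_dB_n)`. -/
def FD (d : ℕ) (ε : Bool) : MVD d →ₗ[Lqz] MVD (d-1) :=
  DirectSum.toModule Lqz Idx (MVD (d-1)) fun i =>
    (mvdof (d-1) i).comp ((DZ ε).restrict fun x hx => DZ_mem ε hx)

theorem FD_mvdof (d : ℕ) (ε : Bool) (i : Idx) (x : ↥(HzSd i.1 d)) :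
    FD d ε (mvdof d i x) = mvdof (d-1) i ⟨DZ ε x.1, DZ_mem ε x.2⟩ := by
  rw [FD, mvdof, DirectSum.toModule_lof]
  rfl

theorem FD_rels (d : ℕ) (hd : 1 ≤ d) (ε : Bool) :
    Submodule.span Lqz (markovRelsD d) ≤
      (Submodule.span Lqz (markovRelsD (d-1))).comap (FD d ε) := by
  rw [Submodule.span_le]
  intro x hx
  simp only [SetLike.mem_coe, Submodule.mem_comap]
  obtain (⟨i, k, l, hkl, a, b, ha, hb, hab, hba, rfl⟩ | ⟨i, a, ha, ha', rfl⟩) |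
      ⟨i, a, ha, ha', rfl⟩ := hx
  · -- trace relations
    rw [map_sub, FD_mvdof, FD_mvdof]
    have hDa := DZ_mem ε ha
    have hDb := DZ_mem ε hb
    rcases Nat.eq_zero_or_pos l with hl | hl
    · subst hl
      have hb0 : DZ ε b = 0 := DZ_zero_of_deg0 ε hb
      have e1 : DZ ε (a * b) = DZ ε a * b := by rw [DZ_mul, hb0, mul_zero, zero_add]
      have e2 : DZ ε (b * a) = b * DZ ε a := by rw [DZ_mul, hb0, zero_mul, add_zero]
      have m1 : DZ ε a * b ∈ HzSd i.1 (d-1) :=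
        mem_HzSd_cast (by omega) (HzSd_mul_mem hDa hb)
      have m2 : b * DZ ε a ∈ HzSd i.1 (d-1) :=
        mem_HzSd_cast (by omega) (HzSd_mul_mem hb hDa)
      rw [mvdof_congr i e1 (DZ_mem ε hab) m1, mvdof_congr i e2 (DZ_mem ε hba) m2]
      exact Submodule.subset_span (Set.mem_union_left _ (Set.mem_union_left _
        ⟨i, k - 1, 0, by omega, DZ ε a, b, hDa, hb, m1, m2, rfl⟩))
    · rcases Nat.eq_zero_or_pos k with hk | hk
      · subst hk
        have ha0 : DZ ε a = 0 := DZ_zero_of_deg0 ε ha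
        have e1 : DZ ε (a * b) = a * DZ ε b := by rw [DZ_mul, ha0, zero_mul, add_zero]
        have e2 : DZ ε (b * a) = DZ ε b * a := by rw [DZ_mul, ha0, mul_zero, zero_add]
        have m1 : a * DZ ε b ∈ HzSd i.1 (d-1) :=
          mem_HzSd_cast (by omega) (HzSd_mul_mem ha hDb)
        have m2 : DZ ε b * a ∈ HzSd i.1 (d-1) :=
          mem_HzSd_cast (by omega) (HzSd_mul_mem hDb ha)
        rw [mvdof_congr i e1 (DZ_mem ε hab) m1, mvdof_congr i e2 (DZ_mem ε hba) m2]
        exact Submodule.subset_span (Set.mem_union_left _ (Set.mem_union_left _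
          ⟨i, 0, l - 1, by omega, a, DZ ε b, ha, hDb, m1, m2, rfl⟩))
      · have e1 : DZ ε (a * b) = a * DZ ε b + DZ ε a * b := DZ_mul ε a b
        have e2 : DZ ε (b * a) = b * DZ ε a + DZ ε b * a := DZ_mul ε b a
        have m1 : a * DZ ε b ∈ HzSd i.1 (d-1) :=
          mem_HzSd_cast (by omega) (HzSd_mul_mem ha hDb)
        have m2 : DZ ε a * b ∈ HzSd i.1 (d-1) :=
          mem_HzSd_cast (by omega) (HzSd_mul_mem hDa hb)
        have m3 : b * DZ ε a ∈ HzSd i.1 (d-1) :=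
          mem_HzSd_cast (by omega) (HzSd_mul_mem hb hDa)
        have m4 : DZ ε b * a ∈ HzSd i.1 (d-1) :=
          mem_HzSd_cast (by omega) (HzSd_mul_mem hDb ha)
        have m12 : a * DZ ε b + DZ ε a * b ∈ HzSd i.1 (d-1) := (HzSd i.1 (d-1)).add_mem m1 m2
        have m34 : b * DZ ε a + DZ ε b * a ∈ HzSd i.1 (d-1) := (HzSd i.1 (d-1)).add_mem m3 m4
        rw [mvdof_congr i e1 (DZ_mem ε hab) m12, mvdof_congr i e2 (DZ_mem ε hba) m34,
          mvdof_add' i m1 m2 m12, mvdof_add' i m3 m4 m34]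
        have hsplit : ∀ p q r s : MVD (d-1), (p + q) - (r + s) = (p - s) + (q - r) :=
          fun p q r s => by abel
        rw [hsplit]
        refine Submodule.add_mem _ ?_ ?_
        · exact Submodule.subset_span (Set.mem_union_left _ (Set.mem_union_left _
            ⟨i, k, l - 1, by omega, a, DZ ε b, ha, hDb, m1, m4, rfl⟩))
        · exact Submodule.subset_span (Set.mem_union_left _ (Set.mem_union_left _
            ⟨i, k - 1, l, by omega, DZ ε a, b, hDa, hb, m2, m3, rfl⟩))
  · -- stabilization relations
    rw [map_sub, FD_mvdof, FD_mvdof]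
    have m1 := DZ_mem ε ha
    have m2 : iotaHZ i.1 (DZ ε a) ∈ HzSd (succI i).1 (d-1) := iotaHZ_mem m1
    have e1 : DZ (m := (succI i).1) ε (iotaHZ i.1 a) = iotaHZ i.1 (DZ ε a) :=
      DZ_iotaHZ ε a
    rw [mvdof_congr (succI i) e1 (DZ_mem ε ha') m2]
    exact Submodule.subset_span (Set.mem_union_left _ (Set.mem_union_right _
      ⟨i, DZ ε a, m1, m2, rfl⟩))
  · -- Markov relations
    rw [map_sub, map_smul, FD_mvdof, FD_mvdof]
    have m1 := DZ_mem ε ha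
    have hs : DZ (m := (succI i).1) ε (ofHZ (sigmaLast i)) = 0 := DZ_sigmaLast i ε
    have hi : DZ (m := (succI i).1) ε (iotaHZ i.1 a) = iotaHZ i.1 (DZ ε a) :=
      DZ_iotaHZ ε a
    have e1 : DZ (m := (succI i).1) ε (iotaHZ i.1 a * ofHZ (sigmaLast i)) =
        iotaHZ i.1 (DZ ε a) * ofHZ (sigmaLast i) := by
      have h2 := congrArg₂ (fun x y => iotaHZ i.1 a * x + y * ofHZ (sigmaLast i)) hs hi
      exact (DZ_mul (m := (succI i).1) ε _ _).trans (h2.trans ((congrArg (fun t => t + iotaHZ i.1 (DZ ε a) * ofHZ (sigmaLast i))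
        (mul_zero (iotaHZ i.1 a))).trans (zero_add _)))
    have m2 : iotaHZ i.1 (DZ ε a) * ofHZ (sigmaLast i) ∈ HzSd (succI i).1 (d-1) :=
      mem_HzSd_cast (by omega) (HzSd_mul_mem (iotaHZ_mem m1)
        (ofHZ_mem_HzSd (e := 0) (degM_sG _)))
    rw [mvdof_congr (succI i) e1 (DZ_mem ε ha') m2]
    exact Submodule.subset_span (Set.mem_union_right _ ⟨i, DZ ε a, m1, m2, rfl⟩)

/-- The induced map on Markov modules. -/
def GD (d : ℕ) (hd : 1 ≤ d) (ε : Bool) : MarkovD d →ₗ[Lqz] MarkovD (d-1) :=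
  Submodule.mapQ _ _ (FD d ε) (FD_rels d hd ε)

theorem GD_isG (d : ℕ) (hd : 1 ≤ d) (ε : Bool) : IsG d ε (GD d hd ε) := by
  obtain ⟨e, rfl⟩ : ∃ e, d = e + 1 := ⟨d - 1, by omega⟩
  intro m hm α idx hα
  show GD (e+1) hd ε (classD (e+1) m hm (sbWord α idx)) =
    ∑ k : Fin (e+1), classD e m hm (sbWordRepl α idx k (RepGen ε (idx k)))
  have hdeg : degM (sbWord α idx) = Multiplicative.ofAdd (e+1) := degM_sbWord α idx hα
  rw [classD, dif_pos hdeg, GD, Submodule.mapQ_apply, FD_mvdof]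
  have hmem : ∀ k : Fin (e+1), ofHZ (sbWordRepl α idx k (RepGen ε (idx k))) ∈
      HzSd m (e+1-1) :=
    fun k => ofHZ_mem_HzSd (degM_sbWordRepl α idx k _ hα (degM_RepGen ε (idx k)))
  have hmemsum : (∑ k : Fin (e+1), ofHZ (sbWordRepl α idx k (RepGen ε (idx k)))) ∈
      HzSd m (e+1-1) := Submodule.sum_mem _ fun k _ => hmem k
  rw [mvdof_congr (d := e+1-1) ⟨m, hm⟩ (DZ_sbWord ε α idx hα) _ hmemsum]
  have hsub : (⟨∑ k : Fin (e+1), ofHZ (sbWordRepl α idx k (RepGen ε (idx k))), hmemsum⟩ :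
      ↥(HzSd m (e+1-1))) = ∑ k : Fin (e+1),
        (⟨ofHZ (sbWordRepl α idx k (RepGen ε (idx k))), hmem k⟩ : ↥(HzSd m (e+1-1))) := by
    ext
    rw [AddSubmonoidClass.coe_finset_sum]
  rw [hsub, map_sum]
  rw [show Submodule.Quotient.mk (∑ k : Fin (e+1),
      mvdof (e+1-1) ⟨m, hm⟩ ⟨ofHZ (sbWordRepl α idx k (RepGen ε (idx k))), hmem k⟩) =
      ∑ k : Fin (e+1), (Submodule.Quotient.mk (mvdof (e+1-1) ⟨m, hm⟩
        ⟨ofHZ (sbWordRepl α idx k (RepGen ε (idx k))), hmem k⟩) : MarkovD (e+1-1)) from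
    map_sum (Submodule.mkQ _) _ _]
  refine Finset.sum_congr rfl fun k _ => ?_
  rw [classD, dif_pos (degM_sbWordRepl α idx k _ hα (degM_RepGen ε (idx k)))]
  rfl

theorem IsG_unique (d : ℕ) (hd : 1 ≤ d) (ε : Bool)
    (g₁ g₂ : MarkovD d →ₗ[Lqz] MarkovD (d-1))
    (h₁ : IsG d ε g₁) (h₂ : IsG d ε g₂) : g₁ = g₂ := by
  apply LinearMap.ext
  intro v
  obtain ⟨x, rfl⟩ := Submodule.Quotient.mk_surjective _ v
  induction x using DirectSum.induction_on with
  | zero =>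
    rw [show (Submodule.Quotient.mk (0 : MVD d) : MarkovD d) = 0 from rfl, map_zero, map_zero]
  | add x y ihx ihy =>
    rw [show (Submodule.Quotient.mk (x + y) : MarkovD d) =
      Submodule.Quotient.mk x + Submodule.Quotient.mk y from rfl, map_add, map_add, ihx, ihy]
  | of i y =>
    rw [← DirectSum.lof_eq_of Lqz]
    obtain ⟨y, hy⟩ := y
    refine Submodule.span_induction (p := fun y hy =>
      g₁ (Submodule.Quotient.mk (mvdof d i ⟨y, hy⟩)) =
      g₂ (Submodule.Quotient.mk (mvdof d i ⟨y, hy⟩))) ?_ ?_ ?_ ?_ hy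
    · rintro z ⟨β, hβ, rfl⟩
      obtain ⟨w, rfl⟩ := SB.mk_surjective β
      obtain ⟨e', α, idx, hα, hword⟩ := exists_sbWord w
      have he : e' = d := by
        rw [hword, degM_sbWord α idx hα] at hβ
        exact Multiplicative.ofAdd.injective hβ
      subst he
      have hβ' : degM (SB.mk w) = Multiplicative.ofAdd e' := hβ
      have hcl : ∀ (hp : ofHZ (SB.mk w) ∈ HzSd i.1 e'),
          (Submodule.Quotient.mk (mvdof e' i ⟨ofHZ (SB.mk w), hp⟩) : MarkovD e') =
            classD e' i.1 i.2 (SB.mk w) := by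
        intro hp
        rw [classD, dif_pos hβ']
      refine (congrArg g₁ (hcl _)).trans (Eq.trans ?_ (congrArg g₂ (hcl _)).symm)
      rw [hword, h₁ i.1 i.2 α idx hα, h₂ i.1 i.2 α idx hα]
    · show g₁ (Submodule.Quotient.mk (mvdof d i 0)) = g₂ (Submodule.Quotient.mk (mvdof d i 0))
      rw [map_zero]
      rw [show (Submodule.Quotient.mk (0 : MVD d) : MarkovD d) = 0 from rfl, map_zero, map_zero]
    · intro y z hy hz ihy ihz
      show g₁ (Submodule.Quotient.mk (mvdof d i (⟨y, hy⟩ + ⟨z, hz⟩))) =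
        g₂ (Submodule.Quotient.mk (mvdof d i (⟨y, hy⟩ + ⟨z, hz⟩)))
      rw [map_add]
      rw [show (Submodule.Quotient.mk (mvdof d i ⟨y, hy⟩ + mvdof d i ⟨z, hz⟩) : MarkovD d) =
        Submodule.Quotient.mk (mvdof d i ⟨y, hy⟩) +
          Submodule.Quotient.mk (mvdof d i ⟨z, hz⟩) from rfl, map_add, map_add, ihy, ihz]
    · intro c y hy ihy
      show g₁ (Submodule.Quotient.mk (mvdof d i (c • ⟨y, hy⟩))) =
        g₂ (Submodule.Quotient.mk (mvdof d i (c • ⟨y, hy⟩)))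
      rw [map_smul]
      rw [show (Submodule.Quotient.mk (c • mvdof d i ⟨y, hy⟩) : MarkovD d) =
        c • Submodule.Quotient.mk (mvdof d i ⟨y, hy⟩) from rfl, map_smul, map_smul, ihy]
/-- For every `d ≥ 1` and each `ε ∈ {0,1}`, there is a unique `ℂ(q,z)`-linear map
`g_ε : Markov(⊔S_dB) → Markov(⊔S_{d-1}B)` such that `g_ε([β,n]) = [f_{n,ε}(β), n]` for every
`n` and every `β ∈ S_dB_n`: the families `{f_{n,0}}_n` and `{f_{n,1}}_n` are compatible with
the defining relations of the Markov modules. -/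
theorem exists_unique_g (d : ℕ) (hd : 1 ≤ d) (ε : Bool) :
    ∃! g : MarkovD d →ₗ[Lqz] MarkovD (d - 1), IsG d ε g := by
  exact ⟨GD d hd ε, GD_isG d hd ε, fun g hg => IsG_unique d hd ε g (GD d hd ε) hg (GD_isG d hd ε)⟩

end
end SingularHOMFLYPT
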